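/- For a nonnegative integer n and parameters a, b, c, d: Σ_{i=0}^{n} (-n)_i (a)_i (b)_i / (i! (c)_i (d)_i) = (-1)^n [(d-a)_n (d-b)_n / ((c)_n (d)_n)] · Σ_{i=0}^{n} (-n)_i (a+b-n+1-c-d)_i (1-d-n)_i / (i! (a-d+1-n)_i (b-d+1-n)_i), assuming all Pochhammer symbols appearing in denominators are nonzero. -/

import Mathlib

noncomputable def poch (x : ℝ) (n : ℕ) : ℝ := ∏ i ∈ Finset.range n, (x + i)

open Finset

lemma poch_zero (x : ℝ) : poch x 0 = 1 := by simp [poch]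

lemma poch_succ (x : ℝ) (m : ℕ) : poch x (m + 1) = poch x m * (x + m) := by
  simp [poch, prod_range_succ]

lemma poch_succ' (x : ℝ) (m : ℕ) : poch x (m + 1) = x * poch (x + 1) m := by
  simp only [poch, prod_range_succ']
  rw [mul_comm]
  congr 1
  · simp
  · apply prod_congr rfl; intro i _; push_cast; ring

lemma poch_add (x : ℝ) (i j : ℕ) : poch x (i + j) = poch x i * poch (x + i) j := by
  simp only [poch, prod_range_add]
  congr 1
  apply prod_congr rfl; intro k _; push_cast; ring

lemma poch_reflect (x : ℝ) (m : ℕ) : poch (1 - x - m) m = (-1) ^ m * poch x m := by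
  induction m generalizing x with
  | zero => simp [poch]
  | succ m ih =>
    rw [poch_succ', poch_succ]
    have h1 : (1 : ℝ) - x - (m + 1 : ℕ) + 1 = 1 - x - m := by push_cast; ring
    rw [h1, ih]
    push_cast; ring

lemma vandermonde (m : ℕ) (x y : ℝ) :
    ∑ k ∈ range (m + 1), (-1) ^ k * (m.choose k : ℝ) * poch x k * poch (y + k) (m - k)
      = poch (y - x) m := by
  induction m generalizing y with
  | zero => simp [poch]
  | succ m ih =>
    have key : ∑ k ∈ range (m + 2),
        (-1) ^ k * ((m+1).choose k : ℝ) * poch x k * poch (y + k) (m + 1 - k)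
        = (y - x) * ∑ k ∈ range (m + 1),
            (-1) ^ k * (m.choose k : ℝ) * poch x k * poch ((y+1) + k) (m - k) := by
      rw [Finset.sum_range_succ']
      have hsplit : ∀ k ∈ range (m + 1),
          (-1) ^ (k+1) * (((m+1).choose (k+1) : ℝ)) * poch x (k+1) * poch (y + (k+1:ℕ)) (m + 1 - (k+1))
          = ((-1) ^ (k+1) * ((m.choose (k+1) : ℝ)) * poch x (k+1) * poch (y + ((k:ℝ)+1)) (m - k))
            - ((-1) ^ k * ((m.choose k : ℝ)) * (poch x k * (x + k)) * poch (y + ((k:ℝ)+1)) (m - k)) := by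
        intro k _
        rw [Nat.choose_succ_succ, Nat.succ_sub_succ, poch_succ x k]
        push_cast
        ring
      have hrhs : ∀ k ∈ range (m + 1),
          (y - x) * ((-1) ^ k * (m.choose k : ℝ) * poch x k * poch ((y+1) + k) (m - k))
          = ((-1) ^ k * (m.choose k : ℝ) * poch x k * ((y + k) * poch ((y + k) + 1) (m - k)))
            - ((-1) ^ k * (m.choose k : ℝ) * (poch x k * (x + k)) * poch (y + ((k:ℝ)+1)) (m - k)) := by
        intro k _
        have h1 : (y:ℝ) + 1 + k = (y + k) + 1 := by ring
        have h2 : (y:ℝ) + ((k:ℝ)+1) = (y + k) + 1 := by ring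
        rw [h1, h2]; ring
      rw [Finset.sum_congr rfl hsplit, Finset.sum_sub_distrib, Finset.mul_sum,
        Finset.sum_congr rfl hrhs, Finset.sum_sub_distrib, sub_add_eq_add_sub]
      congr 1
      have hterm : ∀ k ∈ range (m + 1),
          (-1) ^ k * (m.choose k : ℝ) * poch x k * ((y + k) * poch ((y + k) + 1) (m - k))
          = (-1) ^ k * (m.choose k : ℝ) * poch x k * poch (y + k) (m + 1 - k) := by
        intro k hk
        rw [← poch_succ', Nat.succ_sub (Nat.lt_succ_iff.mp (mem_range.mp hk))]
      rw [Finset.sum_congr rfl hterm, Finset.sum_range_succ' (fun k =>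
        (-1) ^ k * (m.choose k : ℝ) * poch x k * poch (y + k) (m + 1 - k)) m,
        Finset.sum_range_succ]
      have hz : (-1:ℝ) ^ (m+1) * (m.choose (m+1) : ℝ) * poch x (m+1) * poch (y + ((m:ℝ)+1)) (m - m) = 0 := by
        simp [Nat.choose_succ_self]
      rw [hz, add_zero]
      congr 1
      · apply Finset.sum_congr rfl
        intro k _
        rw [Nat.succ_sub_succ]
        push_cast
        ring
      · simp [poch]
    rw [key, ih (y+1)]
    have h3 : (y:ℝ) + 1 - x = (y - x) + 1 := by ring
    rw [h3, ← poch_succ']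

lemma neg_one_pow_cancel (k j : ℕ) : ((-1:ℝ)) ^ j = (-1) ^ (k + j) * (-1) ^ k := by
  rw [pow_add, mul_comm ((-1:ℝ)^k) _, mul_assoc, ← pow_add, ← two_mul, pow_mul]
  norm_num

noncomputable def S (n : ℕ) (a b c d : ℝ) : ℝ :=
  ∑ i ∈ range (n + 1), (-1) ^ i * (n.choose i : ℝ) * poch a i * poch b i *
    poch (c + i) (n - i) * poch (d + i) (n - i)

lemma W (n : ℕ) (u v l m : ℝ) :
    S n u v l m = ∑ k ∈ range (n + 1),
      (n.choose k : ℝ) * poch u k * poch (m - v) k * poch (l - u) (n - k) * poch (m + k) (n - k) := by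
  have hv : ∀ i ∈ range (n + 1), poch v i
      = ∑ k ∈ range (n + 1), (-1) ^ k * (i.choose k : ℝ) * poch (m - v) k * poch (m + k) (i - k) := by
    intro i hi
    have hi' : i ≤ n := Nat.lt_succ_iff.mp (mem_range.mp hi)
    have hsub : ∑ k ∈ range (i + 1), (-1) ^ k * (i.choose k : ℝ) * poch (m - v) k * poch (m + k) (i - k)
        = ∑ k ∈ range (n + 1), (-1) ^ k * (i.choose k : ℝ) * poch (m - v) k * poch (m + k) (i - k) := by
      apply Finset.sum_subset (Finset.range_subset_range.mpr (by omega : i + 1 ≤ n + 1))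
      intro k _ hk
      have : i < k := by simp only [mem_range] at hk; omega
      simp [Nat.choose_eq_zero_of_lt this]
    rw [← hsub, vandermonde i (m - v) m, show m - (m - v) = v from by ring]
  have stepA : S n u v l m = ∑ k ∈ range (n + 1), ∑ i ∈ range (n + 1),
      (-1) ^ i * (n.choose i : ℝ) * poch u i * poch (l + i) (n - i) * poch (m + i) (n - i) *
        ((-1) ^ k * (i.choose k : ℝ) * poch (m - v) k * poch (m + k) (i - k)) := by
    rw [Finset.sum_comm]
    apply Finset.sum_congr rfl
    intro i hi
    rw [show (-1:ℝ) ^ i * (n.choose i : ℝ) * poch u i * poch v i *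
        poch (l + i) (n - i) * poch (m + i) (n - i)
      = ((-1) ^ i * (n.choose i : ℝ) * poch u i * poch (l + i) (n - i) * poch (m + i) (n - i)) * poch v i
      from by ring, hv i hi, Finset.mul_sum]
  rw [stepA]
  apply Finset.sum_congr rfl
  intro k hk
  have hk' : k ≤ n := Nat.lt_succ_iff.mp (mem_range.mp hk)
  have hrange : n + 1 = k + (n - k + 1) := by omega
  rw [hrange, Finset.sum_range_add]
  have hzero : ∑ i ∈ range k,
      (-1) ^ i * (n.choose i : ℝ) * poch u i * poch (l + i) (n - i) * poch (m + i) (n - i) *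
        ((-1) ^ k * (i.choose k : ℝ) * poch (m - v) k * poch (m + k) (i - k)) = 0 := by
    apply Finset.sum_eq_zero
    intro i hi
    have : i < k := mem_range.mp hi
    simp [Nat.choose_eq_zero_of_lt this]
  rw [hzero, zero_add]
  have hterm : ∀ j ∈ range (n - k + 1),
      (-1) ^ (k + j) * (n.choose (k + j) : ℝ) * poch u (k + j) * poch (l + (k + j : ℕ)) (n - (k + j)) *
        poch (m + (k + j : ℕ)) (n - (k + j)) *
        ((-1) ^ k * ((k + j).choose k : ℝ) * poch (m - v) k * poch (m + k) ((k + j) - k))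
      = ((n.choose k : ℝ) * poch u k * poch (m - v) k * poch (m + k) (n - k)) *
        ((-1) ^ j * (((n - k).choose j : ℝ)) * poch (u + k) j * poch ((l + k) + j) ((n - k) - j)) := by
    intro j hj
    have hj' : j ≤ n - k := Nat.lt_succ_iff.mp (mem_range.mp hj)
    have hkj : k + j - k = j := by omega
    have hch : (n.choose (k + j) : ℝ) * ((k + j).choose k : ℝ)
        = (n.choose k : ℝ) * ((n - k).choose j : ℝ) := by
      rw [← Nat.cast_mul, ← Nat.cast_mul,
        Nat.choose_mul (Nat.le_add_right k j), hkj]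
    have hm : poch (m + k) (n - k) = poch (m + k) j * poch (m + (k + j : ℕ)) (n - (k + j)) := by
      have h1 : poch (m + k) (j + ((n - k) - j)) = poch (m + k) j * poch ((m + k) + j) ((n - k) - j) :=
        poch_add _ _ _
      rw [show j + ((n - k) - j) = n - k from by omega,
        show (m + (k:ℝ)) + (j:ℝ) = m + ((k + j : ℕ) : ℝ) from by push_cast; ring,
        show (n - k) - j = n - (k + j) from by omega] at h1
      exact h1
    have hl : poch (l + (k + j : ℕ)) (n - (k + j)) = poch ((l + k) + j) ((n - k) - j) := by
      rw [show (l + ((k + j : ℕ) : ℝ)) = (l + k) + j from by push_cast; ring,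
        show n - (k + j) = (n - k) - j from by omega]
    have hu : poch u (k + j) = poch u k * poch (u + k) j := poch_add u k j
    rw [hm, hl, hu, hkj, neg_one_pow_cancel k j]
    linear_combination (poch u k * poch (u + (k:ℝ)) j * poch (m - v) k * poch (m + (k:ℝ)) j *
      poch ((l + (k:ℝ)) + (j:ℝ)) ((n - k) - j) * poch (m + ((k + j : ℕ):ℝ)) (n - (k + j)) *
      (-1:ℝ) ^ (k + j) * (-1:ℝ) ^ k) * hch
  rw [Finset.sum_congr rfl hterm, ← Finset.mul_sum, vandermonde (n - k) (u + k) (l + k),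
    show (l + (k:ℝ)) - (u + k) = l - u from by ring]
  ring

lemma S_comm_upper (n : ℕ) (a b c d : ℝ) : S n a b c d = S n b a c d := by
  apply Finset.sum_congr rfl; intro i _; ring

lemma S_comm_lower (n : ℕ) (a b c d : ℝ) : S n a b c d = S n a b d c := by
  apply Finset.sum_congr rfl; intro i _; ring

lemma Ttrans (n : ℕ) (a b c d : ℝ) :
    S n a b c d = (-1) ^ n * S n a (c - b) c (1 + a - d - n) := by
  rw [S_comm_upper n a b c d, W n b a c d,
    S_comm_upper n a (c - b) c (1 + a - d - n), W n (c - b) a c (1 + a - d - n)]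
  rw [← Finset.sum_range_reflect (fun k => (n.choose k : ℝ) * poch (c - b) k *
    poch ((1 + a - d - n) - a) k * poch (c - (c - b)) (n - k) *
    poch ((1 + a - d - n) + k) (n - k)) (n + 1), Finset.mul_sum]
  apply Finset.sum_congr rfl
  intro k hk
  have hk' : k ≤ n := Nat.lt_succ_iff.mp (mem_range.mp hk)
  simp only [Nat.add_sub_cancel]
  rw [Nat.choose_symm hk', show n - (n - k) = k from by omega,
    show (1 + a - d - (n:ℝ)) - a = 1 - (d + (k:ℝ)) - ((n - k : ℕ) : ℝ) from by
      push_cast [Nat.cast_sub hk']; ring,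
    poch_reflect (d + (k:ℝ)) (n - k),
    show c - (c - b) = b from by ring,
    show (1 + a - d - (n:ℝ)) + ((n - k : ℕ) : ℝ) = 1 - (d - a) - (k:ℝ) from by
      push_cast [Nat.cast_sub hk']; ring,
    poch_reflect (d - a) k]
  have hs : (-1:ℝ) ^ n * ((-1) ^ (n - k) * (-1) ^ k) = 1 := by
    rw [← pow_add, show n - k + k = n from by omega, ← pow_add, ← two_mul, pow_mul]
    norm_num
  linear_combination (-(n.choose k : ℝ) * poch (c - b) (n - k) * poch (d + (k:ℝ)) (n - k) *
    poch b k * poch (d - a) k) * hs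

lemma core (n : ℕ) (a b c d : ℝ) :
    S n a b c d
      = (-1) ^ n * S n (1 + a + b - c - d - n) (1 - d - n) (1 + a - d - n) (1 + b - d - n) := by
  have hnn : (-1:ℝ) ^ n * (-1) ^ n = 1 := by
    rw [← pow_add, ← two_mul, pow_mul]; norm_num
  rw [Ttrans n a b c d]
  rw [S_comm_lower n a (c - b) c (1 + a - d - n), Ttrans n a (c - b) (1 + a - d - n) c,
    show (1 + a - d - (n:ℝ)) - (c - b) = 1 + a + b - c - d - n from by ring]
  rw [S_comm_upper n a (1 + a + b - c - d - n) (1 + a - d - n) (1 + a - c - n),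
    Ttrans n (1 + a + b - c - d - n) a (1 + a - d - n) (1 + a - c - n),
    show (1 + a - d - (n:ℝ)) - a = 1 - d - n from by ring,
    show 1 + (1 + a + b - c - d - (n:ℝ)) - (1 + a - c - n) - n = 1 + b - d - n from by ring]
  rw [show ((-1:ℝ)) ^ n * ((-1) ^ n * ((-1) ^ n *
      S n (1 + a + b - c - d - n) (1 - d - n) (1 + a - d - n) (1 + b - d - n)))
    = ((-1) ^ n * (-1) ^ n) * ((-1) ^ n *
      S n (1 + a + b - c - d - n) (1 - d - n) (1 + a - d - n) (1 + b - d - n)) from by ring,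
    hnn, one_mul]

lemma poch_neg_nat (n i : ℕ) (hi : i ≤ n) :
    poch (-(n:ℝ)) i = (-1) ^ i * (i.factorial : ℝ) * (n.choose i : ℝ) := by
  have h1 : poch (-(n:ℝ)) i = (-1) ^ i * ∏ j ∈ range i, ((n:ℝ) - j) := by
    rw [poch, show (∏ j ∈ range i, (-(n:ℝ) + j)) = ∏ j ∈ range i, (-1) * ((n:ℝ) - j) from
      Finset.prod_congr rfl (fun j _ => by ring), Finset.prod_mul_distrib,
      Finset.prod_const, Finset.card_range]
  have h2 : ∏ j ∈ range i, ((n:ℝ) - j) = ((n.descFactorial i : ℕ) : ℝ) := by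
    rw [Nat.descFactorial_eq_prod_range, Nat.cast_prod]
    apply Finset.prod_congr rfl
    intro j hj
    have : j ≤ n := by have := mem_range.mp hj; omega
    rw [Nat.cast_sub this]
  rw [h1, h2, Nat.descFactorial_eq_factorial_mul_choose]
  push_cast
  ring

lemma bridge (n : ℕ) (x y p q : ℝ) (hp : ∀ i ≤ n, poch p i ≠ 0) (hq : ∀ i ≤ n, poch q i ≠ 0) :
    ∑ i ∈ range (n + 1),
        poch (-(n:ℝ)) i * poch x i * poch y i / ((i.factorial : ℝ) * poch p i * poch q i)
      = S n x y p q / (poch p n * poch q n) := by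
  rw [S, Finset.sum_div]
  apply Finset.sum_congr rfl
  intro i hi
  have hi' : i ≤ n := Nat.lt_succ_iff.mp (mem_range.mp hi)
  have hpi : poch p n = poch p i * poch (p + i) (n - i) := by
    rw [← poch_add p i (n - i), show i + (n - i) = n from by omega]
  have hqi : poch q n = poch q i * poch (q + i) (n - i) := by
    rw [← poch_add q i (n - i), show i + (n - i) = n from by omega]
  rw [poch_neg_nat n i hi', hpi, hqi]
  have hf : (i.factorial : ℝ) ≠ 0 := Nat.cast_ne_zero.mpr i.factorial_ne_zero
  have hp1 : poch p i ≠ 0 := hp i hi'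
  have hq1 : poch q i ≠ 0 := hq i hi'
  have hp2 : poch (p + i) (n - i) ≠ 0 := by
    intro h
    exact hp n le_rfl (by rw [hpi, h, mul_zero])
  have hq2 : poch (q + i) (n - i) ≠ 0 := by
    intro h
    exact hq n le_rfl (by rw [hqi, h, mul_zero])
  field_simp

/-- Reversal transformation for terminating ₃F₂ series at unit argument. -/
theorem stmt4 (n : ℕ) (a b c d : ℝ)
    (hc : ∀ i ≤ n, poch c i ≠ 0) (hd : ∀ i ≤ n, poch d i ≠ 0)
    (h1 : ∀ i ≤ n, poch (a - d + 1 - n) i ≠ 0)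
    (h2 : ∀ i ≤ n, poch (b - d + 1 - n) i ≠ 0) :
    ∑ i ∈ Finset.range (n + 1),
      poch (-(n : ℝ)) i * poch a i * poch b i /
        ((Nat.factorial i : ℝ) * poch c i * poch d i)
    = (-1 : ℝ) ^ n * (poch (d - a) n * poch (d - b) n / (poch c n * poch d n)) *
      ∑ i ∈ Finset.range (n + 1),
        poch (-(n : ℝ)) i * poch (a + b - n + 1 - c - d) i * poch (1 - d - n) i /
          ((Nat.factorial i : ℝ) * poch (a - d + 1 - n) i * poch (b - d + 1 - n) i) := by
  rw [bridge n a b c d hc hd,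
    bridge n (a + b - n + 1 - c - d) (1 - d - n) (a - d + 1 - n) (b - d + 1 - n) h1 h2]
  have hnn : (-1:ℝ) ^ n * (-1) ^ n = 1 := by
    rw [← pow_add, ← two_mul, pow_mul]; norm_num
  have hX : poch (d - a) n ≠ 0 := by
    intro h
    apply h1 n le_rfl
    rw [show a - d + 1 - (n:ℝ) = 1 - (d - a) - n from by ring, poch_reflect, h, mul_zero]
  have hY : poch (d - b) n ≠ 0 := by
    intro h
    apply h2 n le_rfl
    rw [show b - d + 1 - (n:ℝ) = 1 - (d - b) - n from by ring, poch_reflect, h, mul_zero]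
  have hA : poch (a - d + 1 - (n:ℝ)) n = (-1) ^ n * poch (d - a) n := by
    rw [show a - d + 1 - (n:ℝ) = 1 - (d - a) - n from by ring, poch_reflect]
  have hB : poch (b - d + 1 - (n:ℝ)) n = (-1) ^ n * poch (d - b) n := by
    rw [show b - d + 1 - (n:ℝ) = 1 - (d - b) - n from by ring, poch_reflect]
  have hArgs : S n (a + b - n + 1 - c - d) (1 - d - n) (a - d + 1 - n) (b - d + 1 - n)
      = S n (1 + a + b - c - d - n) (1 - d - n) (1 + a - d - n) (1 + b - d - n) := by
    rw [show a + b - (n:ℝ) + 1 - c - d = 1 + a + b - c - d - n from by ring,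
      show a - d + 1 - (n:ℝ) = 1 + a - d - n from by ring,
      show b - d + 1 - (n:ℝ) = 1 + b - d - n from by ring]
  rw [hA, hB, hArgs, core n a b c d,
    show ((-1:ℝ) ^ n * poch (d - a) n) * ((-1) ^ n * poch (d - b) n)
      = ((-1) ^ n * (-1) ^ n) * (poch (d - a) n * poch (d - b) n) from by ring,
    hnn, one_mul]
  have hC : poch c n ≠ 0 := hc n le_rfl
  have hD : poch d n ≠ 0 := hd n le_rfl
  field_simp
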